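/- Let U ⊆ ℝⁿ be open, f, g₁, …, g_m : U → ℝ of class C^{1,1}, and Ω = {x ∈ U | g₁(x) ≤ 0, …, g_m(x) ≤ 0}. Let (x₀, λ) ∈ Ω × ℝᵐ be such that, for the Lagrangian L_λ(x) = f(x) + Σᵢ λᵢ gᵢ(x), one has L_λ'(x₀) = 0, λᵢ ≥ 0 and λᵢ gᵢ(x₀) = 0 for all i ∈ {1,…,m}. If liminf_{t→0⁺} L_λ'(x₀ + t·h)h / t > 0 for every nonzero h ∈ C(x₀) ∩ ⋂_{i : λᵢ > 0} ker gᵢ'(x₀), then x₀ is a local minimum point of f over Ω, i.e. there is a neighborhood V of x₀ with f(y) ≥ f(x₀) for all y ∈ V ∩ Ω. -/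

import Mathlib

open Filter Metric Set
open scoped Topology RealInnerProductSpace NNReal


def C11On {n : ℕ} (f : EuclideanSpace ℝ (Fin n) → ℝ) (U : Set (EuclideanSpace ℝ (Fin n))) :
    Prop :=
  (∀ x ∈ U, DifferentiableAt ℝ f x) ∧
    ∃ K : ℝ≥0, LipschitzOnWith K (fun y => fderiv ℝ f y) U

lemma slope_tendsto_aux {E : Type*} [NormedAddCommGroup E] [NormedSpace ℝ E]
    {p : E → ℝ} {x₀ : E} (hp : DifferentiableAt ℝ p x₀)
    {s : ℕ → ℝ} {v : ℕ → E} {h : E}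
    (hs0 : ∀ k, 0 < s k) (hs : Tendsto s atTop (𝓝 0))
    (hv1 : ∀ k, ‖v k‖ = 1)
    (hv : Tendsto v atTop (𝓝 h)) :
    Tendsto (fun k => (p (x₀ + s k • v k) - p x₀) / s k) atTop
      (𝓝 (fderiv ℝ p x₀ h)) := by
  set p' := fderiv ℝ p x₀ with hp'
  have hw : Tendsto (fun k => s k • v k) atTop (𝓝 0) := by
    simpa using hs.smul hv
  have hlo : (fun w => p (x₀ + w) - p x₀ - p' w) =o[𝓝 0] fun w => w :=
    hasFDerivAt_iff_isLittleO_nhds_zero.mp hp.hasFDerivAt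
  have hlo2 := hlo.comp_tendsto hw
  have htd : Tendsto (fun k => ‖p (x₀ + s k • v k) - p x₀ - p' (s k • v k)‖ / ‖s k • v k‖)
      atTop (𝓝 0) := (hlo2.norm_norm).tendsto_div_nhds_zero
  set q : ℕ → ℝ := fun k => (p (x₀ + s k • v k) - p x₀ - p' (s k • v k)) / s k with hq
  have hnw : ∀ k, ‖s k • v k‖ = s k := by
    intro k
    rw [norm_smul, hv1 k, Real.norm_eq_abs, abs_of_pos (hs0 k), mul_one]
  have hq0 : Tendsto q atTop (𝓝 0) := by
    apply squeeze_zero_norm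
      (a := fun k => ‖p (x₀ + s k • v k) - p x₀ - p' (s k • v k)‖ / ‖s k • v k‖) _ htd
    intro k
    show ‖q k‖ ≤ ‖p (x₀ + s k • v k) - p x₀ - p' (s k • v k)‖ / ‖s k • v k‖
    rw [hnw k, hq]
    simp only [Real.norm_eq_abs, abs_div, abs_of_pos (hs0 k)]
    exact le_rfl
  have hpv : Tendsto (fun k => p' (v k)) atTop (𝓝 (p' h)) :=
    (p'.continuous.tendsto h).comp hv
  have key : ∀ k, (p (x₀ + s k • v k) - p x₀) / s k = q k + p' (v k) := by
    intro k
    have h1 : p' (s k • v k) = s k * p' (v k) := by simp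
    rw [hq]
    field_simp [h1, (hs0 k).ne']
    rw [h1]; ring
  simpa [key] using hq0.add hpv

set_option maxHeartbeats 2000000 in
/-- Theorem 14: a second-order sufficient optimality condition with `C^{1,1}` data. If the
KKT conditions hold at `(x₀, λ)` and the lower second-order directional derivative of the
Lagrangian is positive on the critical cone, then `x₀` is a local minimum point of `f`
over `Ω`. -/
theorem local_min_of_secondOrder_condition {n m : ℕ} (hm : 0 < m)
    (U : Set (EuclideanSpace ℝ (Fin n))) (hU : IsOpen U)
    (f : EuclideanSpace ℝ (Fin n) → ℝ) (g : Fin m → EuclideanSpace ℝ (Fin n) → ℝ)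
    (hf : C11On f U) (hg : ∀ i, C11On (g i) U)
    (Ω : Set (EuclideanSpace ℝ (Fin n)))
    (hΩ : Ω = {x | x ∈ U ∧ ∀ i, g i x ≤ 0})
    (x₀ : EuclideanSpace ℝ (Fin n)) (hx₀ : x₀ ∈ Ω)
    (lam : Fin m → ℝ)
    (L : EuclideanSpace ℝ (Fin n) → ℝ)
    (hL : L = fun x => f x + ∑ i, lam i * g i x)
    (hstat : fderiv ℝ L x₀ = 0)
    (hlam : ∀ i, 0 ≤ lam i)
    (hcomp : ∀ i, lam i * g i x₀ = 0)
    (hsosc : ∀ h : EuclideanSpace ℝ (Fin n), h ≠ 0 →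
      (∀ j, g j x₀ = 0 → fderiv ℝ (g j) x₀ h ≤ 0) →
      (∀ i, 0 < lam i → fderiv ℝ (g i) x₀ h = 0) →
      0 < liminf (fun t : ℝ => fderiv ℝ L (x₀ + t • h) h / t) (𝓝[>] (0:ℝ))) :
    ∃ V ∈ 𝓝 x₀, ∀ y ∈ V ∩ Ω, f x₀ ≤ f y := by
  subst hΩ
  have hx₀U : x₀ ∈ U := hx₀.1
  have hgx₀ : ∀ i, g i x₀ ≤ 0 := hx₀.2
  obtain ⟨r, hr0, hrU⟩ : ∃ r > 0, ball x₀ r ⊆ U := (Metric.isOpen_iff.mp hU) x₀ hx₀U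
  obtain ⟨hdf, Kf, hKf⟩ := hf
  choose hdg Kg hKg using hg
  -- derivative of L
  have hD : ∀ x ∈ U, HasFDerivAt L
      (fderiv ℝ f x + ∑ i, lam i • fderiv ℝ (g i) x) x := by
    intro x hx
    rw [hL]
    exact (hdf x hx).hasFDerivAt.add
      (HasFDerivAt.fun_sum fun i _ => ((hdg i x hx).hasFDerivAt).const_mul (lam i))
  have hfderivL : ∀ x ∈ U, fderiv ℝ L x = fderiv ℝ f x + ∑ i, lam i • fderiv ℝ (g i) x :=
    fun x hx => (hD x hx).fderiv
  set KL : ℝ := (Kf : ℝ) + ∑ i, lam i * (Kg i : ℝ) with hKLdef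
  have hKL0 : 0 ≤ KL := by
    apply add_nonneg Kf.coe_nonneg
    exact Finset.sum_nonneg fun i _ => mul_nonneg (hlam i) (Kg i).coe_nonneg
  have hLipL : ∀ x ∈ U, ∀ y ∈ U, ‖fderiv ℝ L x - fderiv ℝ L y‖ ≤ KL * ‖x - y‖ := by
    intro x hx y hy
    rw [hfderivL x hx, hfderivL y hy]
    have hfd : ‖fderiv ℝ f x - fderiv ℝ f y‖ ≤ (Kf : ℝ) * ‖x - y‖ := by
      have := (lipschitzOnWith_iff_dist_le_mul.mp hKf) x hx y hy
      rwa [dist_eq_norm, dist_eq_norm] at this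
    have hgd : ∀ i, ‖fderiv ℝ (g i) x - fderiv ℝ (g i) y‖ ≤ (Kg i : ℝ) * ‖x - y‖ := by
      intro i
      have := (lipschitzOnWith_iff_dist_le_mul.mp (hKg i)) x hx y hy
      rwa [dist_eq_norm, dist_eq_norm] at this
    have heq : (fderiv ℝ f x + ∑ i, lam i • fderiv ℝ (g i) x)
        - (fderiv ℝ f y + ∑ i, lam i • fderiv ℝ (g i) y)
        = (fderiv ℝ f x - fderiv ℝ f y)
          + ∑ i, lam i • (fderiv ℝ (g i) x - fderiv ℝ (g i) y) := by
      simp [smul_sub, Finset.sum_sub_distrib]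
      abel
    rw [heq]
    calc ‖(fderiv ℝ f x - fderiv ℝ f y)
          + ∑ i, lam i • (fderiv ℝ (g i) x - fderiv ℝ (g i) y)‖
        ≤ ‖fderiv ℝ f x - fderiv ℝ f y‖
          + ‖∑ i, lam i • (fderiv ℝ (g i) x - fderiv ℝ (g i) y)‖ := norm_add_le _ _
      _ ≤ (Kf : ℝ) * ‖x - y‖ + ∑ i, lam i * ((Kg i : ℝ) * ‖x - y‖) := by
          apply add_le_add hfd
          refine (norm_sum_le _ _).trans ?_
          apply Finset.sum_le_sum
          intro i _
          rw [norm_smul, Real.norm_eq_abs, abs_of_nonneg (hlam i)]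
          exact mul_le_mul_of_nonneg_left (hgd i) (hlam i)
      _ = KL * ‖x - y‖ := by rw [hKLdef, add_mul, Finset.sum_mul]; simp [mul_assoc]
  have hbound : ∀ x ∈ U, ‖fderiv ℝ L x‖ ≤ KL * ‖x - x₀‖ := by
    intro x hx
    have := hLipL x hx x₀ hx₀U
    rwa [hstat, sub_zero] at this
  clear_value KL
  -- by contradiction
  by_contra hcon
  push_neg at hcon
  have hseq : ∀ k : ℕ, ∃ z, z ∈ ball x₀ (1/(k+1)) ∩ {x | x ∈ U ∧ ∀ i, g i x ≤ 0} ∧ f z < f x₀ := by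
    intro k
    obtain ⟨z, hz, hfz⟩ := hcon (ball x₀ (1/(k+1))) (ball_mem_nhds _ (by positivity))
    exact ⟨z, hz, hfz⟩
  choose y hy hfy using hseq
  have hyU : ∀ k, y k ∈ U := fun k => ((hy k).2).1
  have hgy : ∀ k i, g i (y k) ≤ 0 := fun k => ((hy k).2).2
  have hyne : ∀ k, y k ≠ x₀ := by
    intro k he
    exact absurd (he ▸ hfy k) (lt_irrefl _)
  set t : ℕ → ℝ := fun k => ‖y k - x₀‖ with htdef
  have ht0 : ∀ k, 0 < t k := fun k => norm_pos_iff.mpr (sub_ne_zero.mpr (hyne k))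
  have hts : Tendsto t atTop (𝓝 0) := by
    apply squeeze_zero (fun k => (ht0 k).le) (fun k => ?_)
      tendsto_one_div_add_atTop_nhds_zero_nat
    have := (hy k).1
    rw [mem_ball, dist_eq_norm] at this
    exact this.le
  set u : ℕ → EuclideanSpace ℝ (Fin n) := fun k => (t k)⁻¹ • (y k - x₀) with hudef
  have hu1 : ∀ k, ‖u k‖ = 1 := by
    intro k
    rw [hudef]
    simp only [norm_smul, Real.norm_eq_abs, abs_of_pos (inv_pos.mpr (ht0 k))]
    exact inv_mul_cancel₀ (ht0 k).ne'
  have husph : ∀ k, u k ∈ sphere (0:EuclideanSpace ℝ (Fin n)) 1 := by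
    intro k; rw [mem_sphere_zero_iff_norm]; exact hu1 k
  obtain ⟨h, hhs, φ, hφ, hconv⟩ := (isCompact_sphere (0:EuclideanSpace ℝ (Fin n)) 1).tendsto_subseq husph
  have hh1 : ‖h‖ = 1 := mem_sphere_zero_iff_norm.mp hhs
  set s : ℕ → ℝ := fun k => t (φ k) with hsdef
  set v : ℕ → EuclideanSpace ℝ (Fin n) := fun k => u (φ k) with hvdef
  have hs0 : ∀ k, 0 < s k := fun k => ht0 (φ k)
  have hsT : Tendsto s atTop (𝓝 0) := hts.comp hφ.tendsto_atTop
  have hv1 : ∀ k, ‖v k‖ = 1 := fun k => hu1 (φ k)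
  have hvT : Tendsto v atTop (𝓝 h) := hconv
  have hz : ∀ k, x₀ + s k • v k = y (φ k) := by
    intro k
    rw [hsdef, hvdef, hudef]
    simp only [smul_smul, mul_inv_cancel₀ (ht0 (φ k)).ne', one_smul]
    abel
  -- critical cone membership
  have hcone : ∀ j, g j x₀ = 0 → fderiv ℝ (g j) x₀ h ≤ 0 := by
    intro j hj
    have hT := slope_tendsto_aux (hdg j x₀ hx₀U) hs0 hsT hv1 hvT
    refine le_of_tendsto hT (Eventually.of_forall fun k => ?_)
    rw [hz k, hj, sub_zero]
    exact div_nonpos_of_nonpos_of_nonneg (hgy (φ k) j) (hs0 k).le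
  have hfh : fderiv ℝ f x₀ h ≤ 0 := by
    have hT := slope_tendsto_aux (hdf x₀ hx₀U) hs0 hsT hv1 hvT
    refine le_of_tendsto hT (Eventually.of_forall fun k => ?_)
    rw [hz k]
    exact div_nonpos_of_nonpos_of_nonneg (by linarith [hfy (φ k)]) (hs0 k).le
  have hsum0 : fderiv ℝ f x₀ h + ∑ i, lam i * fderiv ℝ (g i) x₀ h = 0 := by
    have hD0 : fderiv ℝ f x₀ + ∑ i, lam i • fderiv ℝ (g i) x₀ = 0 := by
      rw [← hfderivL x₀ hx₀U, hstat]
    have := congrArg (fun T : EuclideanSpace ℝ (Fin n) →L[ℝ] ℝ => T h) hD0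
    simpa [ContinuousLinearMap.sum_apply] using this
  have hterm : ∀ i, lam i * fderiv ℝ (g i) x₀ h ≤ 0 := by
    intro i
    rcases (hlam i).eq_or_lt with he | hl
    · rw [← he, zero_mul]
    · have hgi0 : g i x₀ = 0 := by
        have := hcomp i
        rcases mul_eq_zero.mp this with h1 | h1
        · exact absurd h1 hl.ne'
        · exact h1
      exact mul_nonpos_iff.mpr (Or.inl ⟨hl.le, hcone i hgi0⟩)
  have hker : ∀ i, 0 < lam i → fderiv ℝ (g i) x₀ h = 0 := by
    have hsumz : ∑ i, lam i * fderiv ℝ (g i) x₀ h = 0 := by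
      have h1 : ∑ i, lam i * fderiv ℝ (g i) x₀ h ≤ 0 :=
        Finset.sum_nonpos fun i _ => hterm i
      linarith
    intro i hi
    have hall : ∀ j ∈ Finset.univ, lam j * fderiv ℝ (g j) x₀ h = 0 := by
      have := (Finset.sum_eq_zero_iff_of_nonpos (fun j _ => hterm j)).mp hsumz
      exact this
    have := hall i (Finset.mem_univ i)
    rcases mul_eq_zero.mp this with h1 | h1
    · exact absurd h1 hi.ne'
    · exact h1
  have hne : h ≠ 0 := by
    intro he; rw [he, norm_zero] at hh1; exact zero_ne_one hh1
  have hpos := hsosc h hne hcone hker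
  set F : ℝ → ℝ := fun τ => fderiv ℝ L (x₀ + τ • h) h / τ with hFdef
  -- boundedness below of F near 0+
  have hIoo : Ioo (0:ℝ) r ∈ 𝓝[>] (0:ℝ) := Ioo_mem_nhdsGT_of_mem ⟨le_refl 0, hr0⟩
  have hmemU : ∀ τ : ℝ, 0 ≤ τ → τ < r → ∀ w : EuclideanSpace ℝ (Fin n), ‖w‖ = 1 → x₀ + τ • w ∈ U := by
    intro τ hτ0 hτr w hw
    apply hrU
    rw [mem_ball, dist_eq_norm]
    simp only [add_sub_cancel_left, norm_smul, Real.norm_eq_abs, abs_of_nonneg hτ0, hw, mul_one]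
    exact hτr
  have hFlb : ∀ τ ∈ Ioo (0:ℝ) r, -KL ≤ F τ := by
    intro τ hτ
    have hxU : x₀ + τ • h ∈ U := hmemU τ hτ.1.le hτ.2 h hh1
    have hb := hbound _ hxU
    rw [add_sub_cancel_left, norm_smul, Real.norm_eq_abs, abs_of_pos hτ.1, hh1, mul_one] at hb
    have happ : |fderiv ℝ L (x₀ + τ • h) h| ≤ KL * τ := by
      calc |fderiv ℝ L (x₀ + τ • h) h| ≤ ‖fderiv ℝ L (x₀ + τ • h)‖ * ‖h‖ :=
            (fderiv ℝ L (x₀ + τ • h)).le_opNorm h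
        _ = ‖fderiv ℝ L (x₀ + τ • h)‖ := by rw [hh1, mul_one]
        _ ≤ KL * τ := hb
    show -KL ≤ fderiv ℝ L (x₀ + τ • h) h / τ
    have : -(KL * τ) ≤ fderiv ℝ L (x₀ + τ • h) h := neg_le_of_abs_le happ
    rw [div_eq_mul_inv]
    have hτinv : (0:ℝ) < τ⁻¹ := inv_pos.mpr hτ.1
    calc -KL = -(KL * τ) * τ⁻¹ := by field_simp [hτ.1.ne']
      _ ≤ fderiv ℝ L (x₀ + τ • h) h * τ⁻¹ := by
          exact mul_le_mul_of_nonneg_right this hτinv.le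
  have hbdd : IsBoundedUnder (· ≥ ·) (𝓝[>] (0:ℝ)) F :=
    ⟨-KL, by
      rw [eventually_map]
      exact Filter.mem_of_superset hIoo fun τ hτ => hFlb τ hτ⟩
  obtain ⟨c, hc0, hclt⟩ : ∃ c : ℝ, 0 < c ∧ c < liminf F (𝓝[>] (0:ℝ)) :=
    ⟨liminf F (𝓝[>] (0:ℝ)) / 2, by linarith, by linarith⟩
  have hev : ∀ᶠ τ in 𝓝[>] (0:ℝ), c < F τ := eventually_lt_of_lt_liminf hclt hbdd
  obtain ⟨ε₀, hε₀, hIooε⟩ := mem_nhdsGT_iff_exists_Ioo_subset.mp hev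
  set ε : ℝ := min ε₀ r with hεdef
  have hε0 : 0 < ε := lt_min hε₀ hr0
  have hdir : ∀ τ : ℝ, 0 < τ → τ < ε → c * τ < fderiv ℝ L (x₀ + τ • h) h := by
    intro τ hτ0 hτε
    have h1 : c < F τ := hIooε ⟨hτ0, hτε.trans_le (min_le_left _ _)⟩
    have h2 : c < fderiv ℝ L (x₀ + τ • h) h / τ := h1
    exact (lt_div_iff₀ hτ0).mp h2
  -- choose k
  obtain ⟨δ, hδ0, hδeq⟩ : ∃ δ : ℝ, 0 < δ ∧ (KL + 1) * δ = c / 4 :=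
    ⟨c / (4 * (KL + 1)), by positivity, by field_simp⟩
  have hvev : ∀ᶠ k in atTop, ‖v k - h‖ < δ := by
    have : Tendsto (fun k => ‖v k - h‖) atTop (𝓝 0) := by
      rw [← tendsto_iff_norm_sub_tendsto_zero] ; exact hvT
    exact this.eventually (gt_mem_nhds hδ0)
  have hsev : ∀ᶠ k in atTop, s k < ε := hsT.eventually (gt_mem_nhds hε0)
  obtain ⟨k, hkv, hks⟩ := (hvev.and hsev).exists
  -- facts about y (φ k)
  have htk0 : 0 < s k := hs0 k
  have htkε : s k < ε := hks
  have htkr : s k < r := htkε.trans_le (min_le_right _ _)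
  -- derivative positivity along the segment toward v k
  have hder_pos : ∀ σ : ℝ, 0 < σ → σ ≤ s k → 0 < fderiv ℝ L (x₀ + σ • v k) (v k) := by
    intro σ hσ0 hσt
    have hσε : σ < ε := lt_of_le_of_lt hσt htkε
    have hσr : σ < r := hσε.trans_le (min_le_right _ _)
    have haU : x₀ + σ • v k ∈ U := hmemU σ hσ0.le hσr (v k) (hv1 k)
    have hbU : x₀ + σ • h ∈ U := hmemU σ hσ0.le hσr h hh1
    set A := fderiv ℝ L (x₀ + σ • v k) with hA
    set B := fderiv ℝ L (x₀ + σ • h) with hB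
    have h1 : c * σ < B h := hdir σ hσ0 hσε
    have h2 : ‖A - B‖ ≤ KL * (σ * ‖v k - h‖) := by
      have := hLipL _ haU _ hbU
      have heq : (x₀ + σ • v k) - (x₀ + σ • h) = σ • (v k - h) := by
        rw [smul_sub]; abel
      rwa [heq, norm_smul, Real.norm_eq_abs, abs_of_pos hσ0] at this
    have h3 : ‖B‖ ≤ KL * σ := by
      have := hbound _ hbU
      rwa [add_sub_cancel_left, norm_smul, Real.norm_eq_abs, abs_of_pos hσ0, hh1,
        mul_one] at this
    have e1 : |(A - B) (v k)| ≤ KL * (σ * ‖v k - h‖) := by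
      calc |(A - B) (v k)| ≤ ‖A - B‖ * ‖v k‖ := (A - B).le_opNorm _
        _ = ‖A - B‖ := by rw [hv1 k, mul_one]
        _ ≤ KL * (σ * ‖v k - h‖) := h2
    have e2 : |B (v k - h)| ≤ KL * σ * ‖v k - h‖ := by
      calc |B (v k - h)| ≤ ‖B‖ * ‖v k - h‖ := B.le_opNorm _
        _ ≤ KL * σ * ‖v k - h‖ :=
          mul_le_mul_of_nonneg_right h3 (norm_nonneg _)
    have hsmall : KL * (σ * ‖v k - h‖) ≤ c * σ / 4 := by
      have h4 : ‖v k - h‖ ≤ δ := hkv.le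
      have h5 : KL * (σ * ‖v k - h‖) ≤ (KL + 1) * (σ * δ) := by
        have h5a : KL * (σ * ‖v k - h‖) ≤ KL * (σ * δ) :=
          mul_le_mul_of_nonneg_left
            (mul_le_mul_of_nonneg_left h4 hσ0.le) hKL0
        have h5b : KL * (σ * δ) ≤ (KL + 1) * (σ * δ) := by
          apply mul_le_mul_of_nonneg_right (by linarith)
          positivity
        linarith
      have h6 : (KL + 1) * (σ * δ) = c * σ / 4 := by
        linear_combination σ * hδeq
      linarith
    have hdecomp : A (v k) = B h + (A - B) (v k) + B (v k - h) := by
      simp only [ContinuousLinearMap.sub_apply, map_sub]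
      ring
    rw [hdecomp]
    have e1' := neg_le_of_abs_le e1
    have e2' := neg_le_of_abs_le e2
    nlinarith [hσ0]
  -- strict monotonicity of L along segment
  set P : ℝ → ℝ := fun σ => L (x₀ + σ • v k) with hPdef
  have hPderiv : ∀ σ ∈ Icc (0:ℝ) (s k), HasDerivAt P (fderiv ℝ L (x₀ + σ • v k) (v k)) σ := by
    intro σ hσ
    have hσr : σ < r := lt_of_le_of_lt hσ.2 htkr
    have hxU : x₀ + σ • v k ∈ U := hmemU σ hσ.1 hσr (v k) (hv1 k)
    have hLd : HasFDerivAt L (fderiv ℝ L (x₀ + σ • v k)) (x₀ + σ • v k) := by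
      rw [hfderivL _ hxU]; exact hD _ hxU
    have hcurve : HasDerivAt (fun σ : ℝ => x₀ + σ • v k) (v k) σ := by
      have := ((hasDerivAt_id σ).smul_const (v k)).const_add x₀
      simpa using this
    exact hLd.comp_hasDerivAt σ hcurve
  have hmono : StrictMonoOn P (Icc (0:ℝ) (s k)) := by
    apply strictMonoOn_of_deriv_pos (convex_Icc 0 (s k))
    · intro σ hσ
      exact (hPderiv σ hσ).continuousAt.continuousWithinAt
    · intro σ hσ
      rw [interior_Icc] at hσ
      rw [(hPderiv σ ⟨hσ.1.le, hσ.2.le⟩).deriv]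
      exact hder_pos σ hσ.1 hσ.2.le
  have hP0T : P 0 < P (s k) :=
    hmono (left_mem_Icc.mpr htk0.le) (right_mem_Icc.mpr htk0.le) htk0
  have hP0 : P 0 = L x₀ := by
    show L (x₀ + (0:ℝ) • v k) = L x₀
    rw [zero_smul, add_zero]
  have hPT : P (s k) = L (y (φ k)) := by
    show L (x₀ + s k • v k) = L (y (φ k))
    rw [hz k]
  -- contradiction via KKT values
  have hLx₀ : L x₀ = f x₀ := by
    rw [hL]
    simp only
    rw [Finset.sum_eq_zero fun i _ => hcomp i, add_zero]
  have hLy : L (y (φ k)) ≤ f (y (φ k)) := by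
    rw [hL]
    simp only
    have : ∑ i, lam i * g i (y (φ k)) ≤ 0 :=
      Finset.sum_nonpos fun i _ =>
        mul_nonpos_iff.mpr (Or.inl ⟨hlam i, hgy (φ k) i⟩)
    linarith
  rw [hP0, hPT] at hP0T
  have := hfy (φ k)
  linarith
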